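/- If C ⊆ {0,1}^{n+1} is a 1-perfect binary code, then puncturing C in any coordinate yields a set C' ⊆ {0,1}^n of the same cardinality 2^{n+1}/(n+2), and C' is a completely regular code in Q_n with covering radius 1 in which every vertex outside C' has exactly 2 neighbors in C' and every vertex of C' has no neighbors in C'. -/
import Mathlib

private lemma ham_split {n : ℕ} (i : Fin (n+1)) (f g : Fin (n+1) → Bool) :
    hammingDist f g = (if f i = g i then 0 else 1) + hammingDist (f ∘ i.succAbove) (g ∘ i.succAbove) := by
  simp only [hammingDist, Finset.card_filter]
  rw [Fin.sum_univ_succAbove (fun j => if f j ≠ g j then 1 else 0) i]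
  congr 1
  by_cases h : f i = g i <;> simp [h]

private lemma ball_card {m : ℕ} (c : Fin m → Bool) :
    (Finset.univ.filter fun x : Fin m → Bool => hammingDist x c ≤ 1).card = m + 1 := by
  have hset : (Finset.univ.filter fun x : Fin m → Bool => hammingDist x c ≤ 1)
      = insert c ((Finset.univ : Finset (Fin m)).image fun j => Function.update c j (!c j)) := by
    ext x
    simp only [Finset.mem_filter, Finset.mem_univ, true_and, Finset.mem_insert, Finset.mem_image]
    constructor
    · intro hx
      interval_cases h : hammingDist x c
      · left; exact hammingDist_eq_zero.mp h
      · right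
        rw [hammingDist, Finset.card_eq_one] at h
        obtain ⟨j, hj⟩ := h
        refine ⟨j, ?_⟩
        funext k
        by_cases hk : k = j
        · subst hk
          have : x k ≠ c k := by
            have : k ∈ Finset.univ.filter fun l => x l ≠ c l := hj ▸ Finset.mem_singleton_self k
            simpa using this
          simp only [Function.update_self]
          revert this; cases x k <;> cases c k <;> simp
        · have : k ∉ Finset.univ.filter fun l => x l ≠ c l := by
            rw [hj]; simpa using hk
          simp only [Finset.mem_filter, Finset.mem_univ, true_and, not_not] at this
          rw [Function.update_of_ne hk, this]
    · rintro (rfl | ⟨j, rfl⟩)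
      · simp
      · have : hammingDist (Function.update c j (!c j)) c = 1 := by
          rw [hammingDist, Finset.card_eq_one]
          refine ⟨j, ?_⟩
          ext k
          simp only [Finset.mem_filter, Finset.mem_univ, true_and, Finset.mem_singleton]
          by_cases hk : k = j
          · subst hk; simp
          · simp [Function.update_of_ne hk, hk]
        omega
  rw [hset]
  rw [Finset.card_insert_of_notMem, Finset.card_image_of_injective]
  · simp
  · intro j j' h
    by_contra hne
    have h2 : Function.update c j (!c j) j = Function.update c j' (!c j') j := congrFun h j
    rw [Function.update_self, Function.update_of_ne hne] at h2
    revert h2; cases c j <;> simp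
  · intro hc
    simp only [Finset.mem_image, Finset.mem_univ, true_and] at hc
    obtain ⟨j, hj⟩ := hc
    have h2 : Function.update c j (!c j) j = c j := congrFun hj j
    rw [Function.update_self] at h2
    revert h2; cases c j <;> simp

theorem punctured_perfect_is_cr (n : ℕ) (C : Finset (Fin (n + 1) → Bool))
    (hperf : ∀ x : Fin (n + 1) → Bool, ∃! c, c ∈ C ∧ hammingDist x c ≤ 1)
    (i : Fin (n + 1)) :
    (C.image fun x => x ∘ i.succAbove).card = C.card ∧
    (C.image fun x => x ∘ i.succAbove).card * (n + 2) = 2 ^ (n + 1) ∧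
    (∀ x ∈ C.image fun x => x ∘ i.succAbove,
      (((C.image fun x => x ∘ i.succAbove)).filter fun y => hammingDist x y = 1).card = 0) ∧
    (∀ x ∉ C.image fun x => x ∘ i.succAbove,
      (((C.image fun x => x ∘ i.succAbove)).filter fun y => hammingDist x y = 1).card = 2) := by
  -- if two codewords are within distance 1, they are equal
  have huniq1 : ∀ c ∈ C, ∀ c' ∈ C, hammingDist c c' ≤ 1 → c = c' := by
    intro c hc c' hc' hd
    obtain ⟨d, _, hd2⟩ := hperf c
    have e1 := hd2 c ⟨hc, by simp⟩
    have e2 := hd2 c' ⟨hc', hd⟩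
    rw [e1, e2]
  -- puncturing is injective on C
  have hinj : Set.InjOn (fun x : Fin (n+1) → Bool => x ∘ i.succAbove) C := by
    intro c hc c' hc' h
    simp only at h
    by_cases hi : c i = c' i
    · calc c = i.insertNth (c i) (c ∘ i.succAbove) := (Fin.insertNth_self_removeNth i c).symm
        _ = i.insertNth (c' i) (c' ∘ i.succAbove) := by rw [hi, h]
        _ = c' := Fin.insertNth_self_removeNth i c'
    · apply huniq1 c hc c' hc'
      rw [ham_split i, h, hammingDist_self]
      simp [hi]
  refine ⟨Finset.card_image_of_injOn hinj, ?_, ?_, ?_⟩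
  · -- counting
    rw [Finset.card_image_of_injOn hinj]
    have h1 : ∀ x : Fin (n+1) → Bool, (C.filter fun c => hammingDist x c ≤ 1).card = 1 := by
      intro x
      obtain ⟨c, hc, hu⟩ := hperf x
      rw [Finset.card_eq_one]
      refine ⟨c, ?_⟩
      ext c'
      simp only [Finset.mem_filter, Finset.mem_singleton]
      exact ⟨fun h => hu c' h, fun h => h ▸ ⟨hc.1, hc.2⟩⟩
    have : (Finset.univ : Finset (Fin (n+1) → Bool)).card = 2 ^ (n+1) := by
      simp [Finset.card_univ]
    calc C.card * (n + 2)
        = ∑ _c ∈ C, (n + 2) := by rw [Finset.sum_const, smul_eq_mul]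
      _ = ∑ c ∈ C, (Finset.univ.filter fun x : Fin (n+1) → Bool => hammingDist x c ≤ 1).card := by
          apply Finset.sum_congr rfl; intro c _; rw [ball_card]
      _ = ∑ c ∈ C, ∑ x : Fin (n+1) → Bool, if hammingDist x c ≤ 1 then 1 else 0 := by
          apply Finset.sum_congr rfl; intro c _; rw [Finset.card_filter]
      _ = ∑ x : Fin (n+1) → Bool, ∑ c ∈ C, if hammingDist x c ≤ 1 then 1 else 0 :=
          Finset.sum_comm
      _ = ∑ x : Fin (n+1) → Bool, (C.filter fun c => hammingDist x c ≤ 1).card := by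
          apply Finset.sum_congr rfl; intro x _; rw [Finset.card_filter]
      _ = ∑ _x : Fin (n+1) → Bool, 1 := by
          apply Finset.sum_congr rfl; intro x _; rw [h1]
      _ = 2 ^ (n + 1) := by simp [this]
  · -- no neighbors inside
    intro x hx
    rw [Finset.card_eq_zero, Finset.filter_eq_empty_iff]
    intro y hy
    simp only [Finset.mem_image] at hx hy
    obtain ⟨c, hc, rfl⟩ := hx
    obtain ⟨c', hc', rfl⟩ := hy
    intro hd
    by_cases hi : c i = c' i
    · have : c = c' := by
        apply huniq1 c hc c' hc'
        rw [ham_split i, hi]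
        simp only [ite_true, zero_add]
        omega
      rw [this] at hd
      simp at hd
    · set z : Fin (n+1) → Bool := i.insertNth (c' i) (c ∘ i.succAbove) with hz
      obtain ⟨d, _, hu⟩ := hperf z
      have e1 : c = d := by
        apply hu
        refine ⟨hc, ?_⟩
        rw [ham_split i, hz]
        simp [Ne.symm hi, hammingDist_self, Function.comp_def]
      have e2 : c' = d := by
        apply hu
        refine ⟨hc', ?_⟩
        rw [ham_split i, hz]
        simp only [Fin.insertNth_apply_same, ite_true]
        have : (i.insertNth (c' i) (c ∘ i.succAbove)) ∘ i.succAbove = c ∘ i.succAbove := by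
          funext j; simp [Function.comp]
        rw [this, hd]
      exact hi (e1.trans e2.symm ▸ rfl)
  · -- exactly two neighbors outside
    intro x hx
    have hxn : ∀ c ∈ C, c ∘ i.succAbove ≠ x := by
      intro c hc h
      exact hx (Finset.mem_image.mpr ⟨c, hc, h⟩)
    have key : ∀ b : Bool, ∃ c, c ∈ C ∧ c i = b ∧ hammingDist x (c ∘ i.succAbove) = 1 ∧
        ∀ c' ∈ C, hammingDist x (c' ∘ i.succAbove) = 1 → c' i = b → c' = c := by
      intro b
      obtain ⟨c, ⟨hcC, hcd⟩, hu⟩ := hperf (i.insertNth b x)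
      rw [ham_split i] at hcd
      simp only [Fin.insertNth_apply_same] at hcd
      have hcomp : (i.insertNth b x) ∘ i.succAbove = x := by
        funext j; simp [Function.comp]
      rw [hcomp] at hcd
      have hne0 : hammingDist x (c ∘ i.succAbove) ≠ 0 := by
        intro h
        exact hxn c hcC (hammingDist_eq_zero.mp h).symm
      have hbi : b = c i := by
        by_contra h
        simp only [h, ite_false] at hcd
        omega
      have hd1 : hammingDist x (c ∘ i.succAbove) = 1 := by
        simp only [hbi, ite_true] at hcd
        omega
      refine ⟨c, hcC, hbi.symm, hd1, ?_⟩
      intro c' hc' hd' hbi'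
      apply hu
      refine ⟨hc', ?_⟩
      rw [ham_split i]
      simp only [Fin.insertNth_apply_same, hcomp, hbi', hd', ite_true]
      omega
    obtain ⟨c0, hc0C, hc0i, hc0d, hc0u⟩ := key false
    obtain ⟨c1, hc1C, hc1i, hc1d, hc1u⟩ := key true
    have hne : c0 ∘ i.succAbove ≠ c1 ∘ i.succAbove := by
      intro h
      have := hinj hc0C hc1C h
      rw [this, hc1i] at hc0i
      exact Bool.noConfusion hc0i
    have hset : ((C.image fun x => x ∘ i.succAbove).filter fun y => hammingDist x y = 1)
        = {c0 ∘ i.succAbove, c1 ∘ i.succAbove} := by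
      ext y
      simp only [Finset.mem_filter, Finset.mem_image, Finset.mem_insert, Finset.mem_singleton]
      constructor
      · rintro ⟨⟨c, hc, rfl⟩, hd⟩
        cases hb : c i
        · left; rw [hc0u c hc hd hb]
        · right; rw [hc1u c hc hd hb]
      · rintro (rfl | rfl)
        · exact ⟨⟨c0, hc0C, rfl⟩, hc0d⟩
        · exact ⟨⟨c1, hc1C, rfl⟩, hc1d⟩
    rw [hset, Finset.card_insert_of_notMem (by simp [hne]), Finset.card_singleton]
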